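/- Let ℓ ≥ 1 be an integer and let G_ℓ' be the graph described in the context. Then the total domination number of G_ℓ' equals 2ℓ + 1, i.e. γ_t(G_ℓ') = 2ℓ + 1. -/

import Mathlib

/-- The edge relation of the graph `G_ℓ` (0-indexed). -/
def cycleRel (l : ℕ) (p q : Fin l × Fin 4) : Prop :=
  (p.1 = q.1 ∧ ((p.2.val = 0 ∧ q.2.val = 1) ∨ (p.2.val = 0 ∧ q.2.val = 2) ∨
     (p.2.val = 1 ∧ q.2.val = 3) ∨ (p.2.val = 2 ∧ q.2.val = 3))) ∨
  (q.1.val = p.1.val + 1 ∧ p.2.val = 1 ∧ q.2.val = 1)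

/-- The edge relation of `G_ℓ'`: the graph `G_ℓ` with two extra vertices
`a = Sum.inr false` and `b = Sum.inr true`, and extra edges `a(1,1)`, `b(1,4)`
(0-indexed: `(0,0)` and `(0,3)`) and `ab`. -/
def primeRel (l : ℕ) : (Fin l × Fin 4) ⊕ Bool → (Fin l × Fin 4) ⊕ Bool → Prop
  | .inl p, .inl q => cycleRel l p q
  | .inr false, .inl p => p.1.val = 0 ∧ p.2.val = 0
  | .inr true, .inl p => p.1.val = 0 ∧ p.2.val = 3
  | .inr false, .inr true => True
  | _, _ => False

/-- The graph `G_ℓ'`. -/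
def Gl' (l : ℕ) : SimpleGraph ((Fin l × Fin 4) ⊕ Bool) :=
  SimpleGraph.fromRel (primeRel l)

/-- `D` is a total dominating set of `G`. -/
def IsTotalDomSet {V : Type*} (G : SimpleGraph V) (D : Finset V) : Prop :=
  ∀ v : V, ∃ d ∈ D, G.Adj v d

lemma adj_iff (l : ℕ) (u v : (Fin l × Fin 4) ⊕ Bool) :
    (Gl' l).Adj u v ↔ u ≠ v ∧ (primeRel l u v ∨ primeRel l v u) := by
  simp [Gl', SimpleGraph.fromRel_adj]


section nbrs
variable {l : ℕ} {i : Fin l} {d : (Fin l × Fin 4) ⊕ Bool}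

lemma nbr2 (h : (Gl' l).Adj (.inl (i,2)) d) : d = .inl (i,0) ∨ d = .inl (i,3) := by
  rw [adj_iff] at h
  obtain ⟨hne, h⟩ := h
  rcases d with ⟨qi, qj⟩ | c
  · simp [primeRel, cycleRel, Fin.ext_iff, -Fin.val_eq_zero_iff] at h ⊢; omega
  · cases c <;> simp [primeRel] at h ⊢ <;> omega

lemma nbr0 (hi : i.val ≠ 0) (h : (Gl' l).Adj (.inl (i,0)) d) :
    d = .inl (i,1) ∨ d = .inl (i,2) := by
  rw [adj_iff] at h
  obtain ⟨hne, h⟩ := h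
  rcases d with ⟨qi, qj⟩ | c
  · simp [primeRel, cycleRel, Fin.ext_iff, -Fin.val_eq_zero_iff] at h ⊢; omega
  · cases c <;> simp [primeRel] at h ⊢ <;> omega

lemma nbr0' (hi : i.val = 0) (h : (Gl' l).Adj (.inl (i,0)) d) :
    d = .inl (i,1) ∨ d = .inl (i,2) ∨ d = .inr false := by
  rw [adj_iff] at h
  obtain ⟨hne, h⟩ := h
  rcases d with ⟨qi, qj⟩ | c
  · simp [primeRel, cycleRel, Fin.ext_iff, -Fin.val_eq_zero_iff] at h ⊢; omega
  · cases c <;> simp [primeRel] at h ⊢ <;> omega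

lemma nbr3' (hi : i.val = 0) (h : (Gl' l).Adj (.inl (i,3)) d) :
    d = .inl (i,1) ∨ d = .inl (i,2) ∨ d = .inr true := by
  rw [adj_iff] at h
  obtain ⟨hne, h⟩ := h
  rcases d with ⟨qi, qj⟩ | c
  · simp [primeRel, cycleRel, Fin.ext_iff, -Fin.val_eq_zero_iff] at h ⊢; omega
  · cases c <;> simp [primeRel] at h ⊢ <;> omega

lemma nbra (hl : 0 < l) (h : (Gl' l).Adj (.inr false) d) :
    d = .inl (⟨0, hl⟩, 0) ∨ d = .inr true := by
  rw [adj_iff] at h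
  obtain ⟨hne, h⟩ := h
  rcases d with ⟨qi, qj⟩ | c
  · simp [primeRel, cycleRel, Fin.ext_iff, -Fin.val_eq_zero_iff] at h ⊢; omega
  · cases c <;> simp [primeRel] at h ⊢ <;> omega

lemma nbrb (hl : 0 < l) (h : (Gl' l).Adj (.inr true) d) :
    d = .inl (⟨0, hl⟩, 3) ∨ d = .inr false := by
  rw [adj_iff] at h
  obtain ⟨hne, h⟩ := h
  rcases d with ⟨qi, qj⟩ | c
  · simp [primeRel, cycleRel, Fin.ext_iff, -Fin.val_eq_zero_iff] at h ⊢; omega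
  · cases c <;> simp [primeRel] at h ⊢ <;> omega

end nbrs

section adjs
variable {l : ℕ} (i : Fin l)

lemma adj01 : (Gl' l).Adj (.inl (i,0)) (.inl (i,1)) := by
  rw [adj_iff]; simp [primeRel, cycleRel]

lemma adj20 : (Gl' l).Adj (.inl (i,2)) (.inl (i,0)) := by
  rw [adj_iff]; simp [primeRel, cycleRel]

lemma adj31 : (Gl' l).Adj (.inl (i,3)) (.inl (i,1)) := by
  rw [adj_iff]; simp [primeRel, cycleRel]

lemma adja0 (hl : 0 < l) : (Gl' l).Adj (.inr false) (.inl (⟨0,hl⟩, 0)) := by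
  rw [adj_iff]; simp [primeRel]

lemma adjba : (Gl' (l := l)).Adj (.inr true) (.inr false) := by
  rw [adj_iff]; simp [primeRel]

end adjs

def key {l : ℕ} : (Fin l × Fin 4) ⊕ Bool → ℕ
  | .inl p => p.1.val
  | .inr _ => 0

@[simp] lemma key_inl {l : ℕ} (p : Fin l × Fin 4) : key (.inl p) = p.1.val := rfl
@[simp] lemma key_inr {l : ℕ} (c : Bool) : key (l := l) (.inr c) = 0 := rfl

lemma two_le_card {V : Type*} [DecidableEq V] {F : Finset V} {x y : V}
    (hx : x ∈ F) (hy : y ∈ F) (hxy : x ≠ y) : 2 ≤ F.card :=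
  Finset.one_lt_card.mpr ⟨x, hx, y, hy, hxy⟩

lemma three_le_card {V : Type*} [DecidableEq V] {F : Finset V} {x y z : V}
    (hx : x ∈ F) (hy : y ∈ F) (hz : z ∈ F)
    (hxy : x ≠ y) (hxz : x ≠ z) (hyz : y ≠ z) : 3 ≤ F.card := by
  have hsub : ({x, y, z} : Finset V) ⊆ F := by
    intro t ht
    simp only [Finset.mem_insert, Finset.mem_singleton] at ht
    rcases ht with rfl | rfl | rfl <;> assumption
  have hle := Finset.card_le_card hsub
  rwa [Finset.card_insert_of_notMem (by simp [hxy, hxz]),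
    Finset.card_insert_of_notMem (by simp [hyz]), Finset.card_singleton] at hle

lemma lower {l : ℕ} (hl : 0 < l) (D : Finset ((Fin l × Fin 4) ⊕ Bool))
    (hD : IsTotalDomSet (Gl' l) D) : 2 * l + 1 ≤ D.card := by
  classical
  have hmap : ∀ x ∈ D, key x ∈ Finset.range l := by
    intro x _
    rcases x with ⟨qi, qj⟩ | c
    · simpa using qi.isLt
    · simpa using hl
  rw [Finset.card_eq_sum_card_fiberwise hmap]
  have h0mem : (0 : ℕ) ∈ Finset.range l := by simpa using hl
  have hsum : (∑ b ∈ Finset.range l, if b = 0 then 3 else 2) = 2 * l + 1 := by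
    rw [← Finset.add_sum_erase _ _ h0mem, if_pos rfl,
      Finset.sum_congr rfl (fun b hb => if_neg (Finset.ne_of_mem_erase hb)),
      Finset.sum_const, Finset.card_erase_of_mem h0mem, Finset.card_range, smul_eq_mul]
    omega
  have hbound : ∀ b ∈ Finset.range l,
      (if b = 0 then 3 else 2) ≤ (D.filter fun x => key x = b).card := by
    intro b hb
    by_cases hb0 : b = 0
    · subst hb0
      rw [if_pos rfl]
      set i0 : Fin l := ⟨0, hl⟩ with hi0
      obtain ⟨d2, hd2D, h2a⟩ := hD (Sum.inl (i0, 2)); have h2 := nbr2 h2a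
      obtain ⟨d0, hd0D, h0a⟩ := hD (Sum.inl (i0, 0)); have h0 := nbr0' rfl h0a
      obtain ⟨d3, hd3D, h3a⟩ := hD (Sum.inl (i0, 3)); have h3 := nbr3' rfl h3a
      obtain ⟨da, hdaD, haa⟩ := hD (Sum.inr false); have ha := nbra hl haa
      obtain ⟨db, hdbD, hba⟩ := hD (Sum.inr true); have hb' := nbrb hl hba
      have k2 : key d2 = 0 := by rcases h2 with rfl | rfl <;> simp [hi0]
      have k0 : key d0 = 0 := by rcases h0 with rfl | rfl | rfl <;> simp [hi0]
      have k3 : key d3 = 0 := by rcases h3 with rfl | rfl | rfl <;> simp [hi0]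
      have ka : key da = 0 := by rcases ha with rfl | rfl <;> simp
      have kb : key db = 0 := by rcases hb' with rfl | rfl <;> simp
      have m2 : d2 ∈ D.filter fun x => key x = 0 := Finset.mem_filter.mpr ⟨hd2D, k2⟩
      have m0 : d0 ∈ D.filter fun x => key x = 0 := Finset.mem_filter.mpr ⟨hd0D, k0⟩
      have m3 : d3 ∈ D.filter fun x => key x = 0 := Finset.mem_filter.mpr ⟨hd3D, k3⟩
      have ma : da ∈ D.filter fun x => key x = 0 := Finset.mem_filter.mpr ⟨hdaD, ka⟩
      have mb : db ∈ D.filter fun x => key x = 0 := Finset.mem_filter.mpr ⟨hdbD, kb⟩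
      by_cases h03 : d0 = d3
      · -- use d0, da, db
        have hd0' : d0 = .inl (i0, 1) ∨ d0 = .inl (i0, 2) := by
          rcases h0 with rfl | rfl | rfl
          · left; rfl
          · right; rfl
          · rcases h3 with h | h | h <;> simp_all
        have n1 : d0 ≠ da := by
          rcases hd0' with rfl | rfl <;> rcases ha with rfl | rfl <;> simp
        have n2 : d0 ≠ db := by
          rcases hd0' with rfl | rfl <;> rcases hb' with rfl | rfl <;> simp
        have n3 : da ≠ db := by
          rcases ha with rfl | rfl <;> rcases hb' with rfl | rfl <;> simp
        exact three_le_card m0 ma mb n1 n2 n3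
      · -- use d2, d0, d3
        have n1 : d2 ≠ d0 := by
          rcases h2 with rfl | rfl <;> rcases h0 with rfl | rfl | rfl <;> simp
        have n2 : d2 ≠ d3 := by
          rcases h2 with rfl | rfl <;> rcases h3 with rfl | rfl | rfl <;> simp
        exact three_le_card m2 m0 m3 n1 n2 h03
    · rw [if_neg hb0]
      set i : Fin l := ⟨b, Finset.mem_range.mp hb⟩ with hi
      obtain ⟨d1, hd1D, h1a⟩ := hD (Sum.inl (i, 2)); have h1 := nbr2 h1a
      obtain ⟨d2, hd2D, h2a⟩ := hD (Sum.inl (i, 0))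
      have h2 := nbr0 (by simpa [hi] using hb0) h2a
      have k1 : key d1 = b := by rcases h1 with rfl | rfl <;> simp [hi]
      have k2 : key d2 = b := by rcases h2 with rfl | rfl <;> simp [hi]
      have n12 : d1 ≠ d2 := by
        rcases h1 with rfl | rfl <;> rcases h2 with rfl | rfl <;> simp
      exact two_le_card (Finset.mem_filter.mpr ⟨hd1D, k1⟩)
        (Finset.mem_filter.mpr ⟨hd2D, k2⟩) n12
  calc 2 * l + 1 = ∑ b ∈ Finset.range l, (if b = 0 then 3 else 2) := hsum.symm
    _ ≤ _ := Finset.sum_le_sum hbound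


/-- The total domination number of `G_ℓ'` equals `2ℓ + 1`. -/
theorem stmt2 (l : ℕ) (hl : 1 ≤ l) :
    sInf {n : ℕ | ∃ D : Finset ((Fin l × Fin 4) ⊕ Bool),
      IsTotalDomSet (Gl' l) D ∧ D.card = n} = 2 * l + 1 := by
  classical
  set D : Finset ((Fin l × Fin 4) ⊕ Bool) := insert (Sum.inr false)
    ((Finset.univ.image fun i : Fin l => (Sum.inl (i, 0) : (Fin l × Fin 4) ⊕ Bool)) ∪
     (Finset.univ.image fun i : Fin l => Sum.inl (i, 1))) with hDdef
  have mem0 : ∀ i : Fin l, (Sum.inl (i, 0) : (Fin l × Fin 4) ⊕ Bool) ∈ D := by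
    intro i; simp [hDdef]
  have mem1 : ∀ i : Fin l, (Sum.inl (i, 1) : (Fin l × Fin 4) ⊕ Bool) ∈ D := by
    intro i; simp [hDdef]
  have memf : (Sum.inr false : (Fin l × Fin 4) ⊕ Bool) ∈ D := by simp [hDdef]
  have hdom : IsTotalDomSet (Gl' l) D := by
    intro v
    rcases v with ⟨i, j⟩ | c
    · have hj : j = 0 ∨ j = 1 ∨ j = 2 ∨ j = 3 := by omega
      rcases hj with rfl | rfl | rfl | rfl
      · exact ⟨_, mem1 i, adj01 i⟩
      · exact ⟨_, mem0 i, (adj01 i).symm⟩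
      · exact ⟨_, mem0 i, adj20 i⟩
      · exact ⟨_, mem1 i, adj31 i⟩
    · cases c
      · exact ⟨_, mem0 ⟨0, hl⟩, adja0 hl⟩
      · exact ⟨_, memf, adjba⟩
  have hinj0 : Function.Injective (fun i : Fin l => (Sum.inl (i, (0:Fin 4)) : (Fin l × Fin 4) ⊕ Bool)) := by
    intro a b hab; simpa using hab
  have hinj1 : Function.Injective (fun i : Fin l => (Sum.inl (i, (1:Fin 4)) : (Fin l × Fin 4) ⊕ Bool)) := by
    intro a b hab; simpa using hab
  have hcard : D.card = 2 * l + 1 := by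
    rw [hDdef, Finset.card_insert_of_notMem (by simp),
      Finset.card_union_of_disjoint (by simp [Finset.disjoint_left]),
      Finset.card_image_of_injective _ hinj0, Finset.card_image_of_injective _ hinj1,
      Finset.card_univ, Fintype.card_fin]
    ring
  have hmem : 2 * l + 1 ∈ {n : ℕ | ∃ D : Finset ((Fin l × Fin 4) ⊕ Bool),
      IsTotalDomSet (Gl' l) D ∧ D.card = n} := ⟨D, hdom, hcard⟩
  apply le_antisymm (Nat.sInf_le hmem)
  apply le_csInf ⟨_, hmem⟩
  rintro n ⟨D', hdom', rfl⟩
  exact lower hl D' hdom'
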